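/- Let λ be a partition of n ≥ 2 and q = λ₁/n. Then c_{λ'} ≤ (n/(n−1))·(1−q), where c_{λ'} = (1/2)[1 + Σᵢ λ'ᵢ(λ'ᵢ−1)/(n(n−1)) − Σᵢ λᵢ(λᵢ−1)/(n(n−1))]. -/

import Mathlib

open Finset

/-- `c_{λ'} = (1/2)[1 + Σᵢ λ'ᵢ(λ'ᵢ−1)/(n(n−1)) − Σᵢ λᵢ(λᵢ−1)/(n(n−1))]`, where
`λᵢ = μ.rowLen i`, `λ'ᵢ = μ.colLen i` and `n = μ.card`. -/
noncomputable def cB (μ : YoungDiagram) : ℝ :=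
  (1 / 2) *
    (1 + (∑ i ∈ Finset.range μ.card, (μ.colLen i : ℝ) * ((μ.colLen i : ℝ) - 1)) /
        (μ.card * ((μ.card : ℝ) - 1))
      - (∑ i ∈ Finset.range μ.card, (μ.rowLen i : ℝ) * ((μ.rowLen i : ℝ) - 1)) /
        (μ.card * ((μ.card : ℝ) - 1)))

lemma sum_colLen_eq_card (μ : YoungDiagram) :
    ∑ j ∈ Finset.range μ.card, μ.colLen j = μ.card := by
  have h := Finset.card_eq_sum_card_fiberwise (f := Prod.snd) (s := μ.cells)
    (t := Finset.range μ.card) (fun c hc => by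
      rw [Finset.mem_coe, Finset.mem_range]
      have hc' : (c.1, c.2) ∈ μ := hc
      have h1 : c.2 < μ.rowLen c.1 := YoungDiagram.mem_iff_lt_rowLen.mp hc'
      have h2 : μ.rowLen c.1 ≤ μ.card := by
        rw [μ.rowLen_eq_card]
        exact Finset.card_le_card (Finset.filter_subset _ _)
      omega)
  refine Eq.trans ?_ h.symm
  refine Finset.sum_congr rfl fun j _ => ?_
  rw [μ.colLen_eq_card]
  rfl

/-- `c_{λ'} ≤ (n/(n−1))·(1−q)` where `q = λ₁/n`. -/
theorem c_conj_upper_bound (μ : YoungDiagram) (n : ℕ) (hn : μ.card = n) (h2 : 2 ≤ n)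
    (q : ℝ) (hq : q = (μ.rowLen 0 : ℝ) / n) :
    cB μ ≤ ((n : ℝ) / ((n : ℝ) - 1)) * (1 - q) := by
  subst hq
  set a := μ.rowLen 0 with ha
  -- basic facts
  have h00 : (0, 0) ∈ μ := by
    have hpos : 0 < μ.card := by omega
    obtain ⟨c, hc⟩ := Finset.card_pos.mp hpos
    have hc' : (c.1, c.2) ∈ μ := hc
    exact μ.up_left_mem (Nat.zero_le _) (Nat.zero_le _) hc'
  have ha1 : 1 ≤ a := YoungDiagram.mem_iff_lt_rowLen.mp h00
  have han : a ≤ n := by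
    rw [← hn, ha, μ.rowLen_eq_card]
    exact Finset.card_le_card (Finset.filter_subset _ _)
  have hcol0 : ∀ j, a ≤ j → μ.colLen j = 0 := by
    intro j hj
    by_contra h
    have : (0, j) ∈ μ := YoungDiagram.mem_iff_lt_colLen.mpr (Nat.pos_of_ne_zero h)
    have := YoungDiagram.mem_iff_lt_rowLen.mp this
    omega
  have hcol1 : ∀ j < a, 1 ≤ μ.colLen j := by
    intro j hj
    exact YoungDiagram.mem_iff_lt_colLen.mp (YoungDiagram.mem_iff_lt_rowLen.mpr hj)
  have hsum : ∑ j ∈ Finset.range a, μ.colLen j = n := by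
    have hsub : ∑ j ∈ Finset.range a, μ.colLen j = ∑ j ∈ Finset.range n, μ.colLen j := by
      apply Finset.sum_subset (Finset.range_subset_range.mpr han)
      intro j hj hj'
      simp only [Finset.mem_range] at hj hj'
      exact hcol0 j (by omega)
    have hsum' : ∑ j ∈ Finset.range n, μ.colLen j = n := by
      have := sum_colLen_eq_card μ
      rwa [hn] at this
    exact hsub.trans hsum' 
  -- real variables
  set A := ∑ i ∈ Finset.range μ.card, (μ.colLen i : ℝ) * ((μ.colLen i : ℝ) - 1) with hA
  set B := ∑ i ∈ Finset.range μ.card, (μ.rowLen i : ℝ) * ((μ.rowLen i : ℝ) - 1) with hB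
  have hterm : ∀ x : ℕ, (0 : ℝ) ≤ (x : ℝ) * ((x : ℝ) - 1) := by
    intro x
    rcases Nat.eq_zero_or_pos x with h | h
    · simp [h]
    · have : (1 : ℝ) ≤ (x : ℝ) := by exact_mod_cast h
      nlinarith
  have hBge : (a : ℝ) * ((a : ℝ) - 1) ≤ B := by
    rw [hB]
    have h0 : 0 ∈ Finset.range μ.card := by
      simp only [Finset.mem_range]; omega
    exact Finset.single_le_sum (f := fun i => (μ.rowLen i : ℝ) * ((μ.rowLen i : ℝ) - 1))
      (fun i _ => hterm _) h0
  -- bound A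
  have hAa : A = ∑ j ∈ Finset.range a, (μ.colLen j : ℝ) * ((μ.colLen j : ℝ) - 1) := by
    rw [hA]
    symm
    apply Finset.sum_subset (by rw [hn]; exact Finset.range_subset_range.mpr han)
    intro j hj hj'
    simp only [Finset.mem_range, hn] at hj hj'
    rw [hcol0 j (by omega)]
    simp
  set y : ℕ → ℝ := fun j => (μ.colLen j : ℝ) - 1 with hy
  have hynn : ∀ j ∈ Finset.range a, 0 ≤ y j := by
    intro j hj
    simp only [Finset.mem_range] at hj
    have := hcol1 j hj
    have : (1 : ℝ) ≤ (μ.colLen j : ℝ) := by exact_mod_cast this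
    simp [hy]; linarith
  have hysum : ∑ j ∈ Finset.range a, y j = (n : ℝ) - a := by
    simp only [hy, Finset.sum_sub_distrib, Finset.sum_const, Finset.card_range,
      nsmul_eq_mul, mul_one]
    rw [← Nat.cast_sum, hsum]
  have hysq : ∑ j ∈ Finset.range a, (y j) ^ 2 ≤ ((n : ℝ) - a) ^ 2 := by
    calc ∑ j ∈ Finset.range a, (y j) ^ 2
        ≤ ∑ j ∈ Finset.range a, y j * ((n : ℝ) - a) := by
          apply Finset.sum_le_sum
          intro j hj
          have h1 : y j ≤ (n : ℝ) - a := by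
            rw [← hysum]
            exact Finset.single_le_sum hynn hj
          have h2 := hynn j hj
          nlinarith
      _ = ((n : ℝ) - a) ^ 2 := by rw [← Finset.sum_mul, hysum]; ring
  have hAle : A ≤ ((n : ℝ) - a) ^ 2 + ((n : ℝ) - a) := by
    rw [hAa]
    have : ∀ j ∈ Finset.range a, (μ.colLen j : ℝ) * ((μ.colLen j : ℝ) - 1)
        = (y j) ^ 2 + y j := by
      intro j _
      simp only [hy]; ring
    rw [Finset.sum_congr rfl this, Finset.sum_add_distrib, hysum]
    linarith [hysq]
  -- final algebra
  have hn2 : (2 : ℝ) ≤ (n : ℝ) := by exact_mod_cast h2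
  have han' : (a : ℝ) ≤ (n : ℝ) := by exact_mod_cast han
  have ha1' : (1 : ℝ) ≤ (a : ℝ) := by exact_mod_cast ha1
  have hD : (0 : ℝ) < (n : ℝ) * ((n : ℝ) - 1) := by nlinarith
  have hkey : A - B ≤ (n : ℝ) * ((n : ℝ) + 1 - 2 * a) := by nlinarith
  rw [cB, ← hA, ← hB, hn]
  have e : 1 + A / ((n : ℝ) * ((n : ℝ) - 1)) - B / ((n : ℝ) * ((n : ℝ) - 1))
      = 1 + (A - B) / ((n : ℝ) * ((n : ℝ) - 1)) := by ring
  rw [e]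
  have h1 : (A - B) / ((n : ℝ) * ((n : ℝ) - 1))
      ≤ ((n : ℝ) * ((n : ℝ) + 1 - 2 * a)) / ((n : ℝ) * ((n : ℝ) - 1)) :=
    (div_le_div_iff_of_pos_right hD).mpr hkey
  have h2 : (1 : ℝ) / 2 * (1 + ((n : ℝ) * ((n : ℝ) + 1 - 2 * a)) / ((n : ℝ) * ((n : ℝ) - 1)))
      = ((n : ℝ) / ((n : ℝ) - 1)) * (1 - (a : ℝ) / n) := by
    have hne : (n : ℝ) ≠ 0 := by linarith
    have hne1 : (n : ℝ) - 1 ≠ 0 := by linarith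
    field_simp
    ring
  linarith
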